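/- Let Γ = G₁ *_P G₂ be an amalgamated product where P is a common subgroup, and suppose P ⊆ P₁ ⊆ G₁ and P ⊆ P₂ ⊆ G₂ with P of possibly infinite index in P₁ and P₂. In the Bass–Serre tree T of Γ, the set of vertices fixed-stabilized through the subgroup Q = P₁ *_P P₂ — namely the domain D of the edge point — is a Q-invariant subtree which is Q-equivariantly isomorphic to the Bass–Serre tree of the splitting Q = P₁ *_P P₂, and Q acts on D with quotient a single edge. -/

import Mathlib

open Pointwise

/-- The Bass–Serre graph of `Γ` relative to two subgroups `A`, `B`: vertex set
`Γ/A ⊔ Γ/B`, with `γA` adjacent to `γB`.  When `Γ = A *_{A ⊓ B} B`, this is the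
Bass–Serre tree of the splitting. -/
def BassSerreGraph (Γ : Type*) [Group Γ] (A B : Subgroup Γ) :
    SimpleGraph ((Γ ⧸ A) ⊕ (Γ ⧸ B)) where
  Adj u v := ∃ γ : Γ,
    (u = Sum.inl (QuotientGroup.mk γ) ∧ v = Sum.inr (QuotientGroup.mk γ)) ∨
    (v = Sum.inl (QuotientGroup.mk γ) ∧ u = Sum.inr (QuotientGroup.mk γ))
  symm := ⟨by rintro u v ⟨γ, h | h⟩ <;> exact ⟨γ, by tauto⟩⟩
  loopless := ⟨by rintro u ⟨γ, ⟨h1, h2⟩ | ⟨h1, h2⟩⟩ <;> simp [h1] at h2⟩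

/-- The action of `Γ` on the vertices of its Bass–Serre graph. -/
def bsSmul {Γ : Type*} [Group Γ] {A B : Subgroup Γ} (γ : Γ) :
    (Γ ⧸ A) ⊕ (Γ ⧸ B) → (Γ ⧸ A) ⊕ (Γ ⧸ B) :=
  Sum.map (fun x => γ • x) (fun y => γ • y)

def IsSubtree {V : Type*} (T : SimpleGraph V) (A : Set V) : Prop :=
  A.Nonempty ∧ ∀ a ∈ A, ∀ b ∈ A, ∃ p : T.Walk a b, ∀ x ∈ p.support, x ∈ A

namespace BSAux
open SimpleGraph


variable {V : Type*} {V' : Type*} {G : SimpleGraph V} {G' : SimpleGraph V'}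

/-- A walk has no backtracking if vertices two apart are distinct. -/
def NB {u v : V} (p : G.Walk u v) : Prop :=
  ∀ i, i + 2 ≤ p.length → p.getVert i ≠ p.getVert (i + 2)

lemma nb_nil {u : V} : NB (Walk.nil : G.Walk u u) := by
  intro i hi; simp [Walk.length_nil] at hi

lemma nb_cons {u v w : V} (h : G.Adj u v) (p : G.Walk v w) (hp : NB p)
    (h1 : u ≠ p.getVert 1) : NB (Walk.cons h p) := by
  intro i hi
  match i with
  | 0 => simpa [Walk.getVert_zero, Walk.getVert_cons_succ] using h1
  | (j+1) =>
    rw [Walk.getVert_cons_succ, Walk.getVert_cons_succ]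
    exact hp j (by simpa [Walk.length_cons] using hi)

lemma nb_of_cons {u v w : V} {h : G.Adj u v} {p : G.Walk v w}
    (hp : NB (Walk.cons h p)) : NB p := by
  intro i hi
  have := hp (i+1) (by simp [Walk.length_cons]; omega)
  simpa [Walk.getVert_cons_succ] using this

lemma nb_copy {u v u' v' : V} (p : G.Walk u v) (hu : u = u') (hv : v = v')
    (hp : NB p) : NB (p.copy hu hv) := by
  subst hu; subst hv; simpa using hp

lemma getVert_map (f : G →g G') {u v : V} (p : G.Walk u v) (i : ℕ) :
    (p.map f).getVert i = f (p.getVert i) := by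
  induction p generalizing i with
  | nil => simp [Walk.getVert]
  | cons h p ih =>
    match i with
    | 0 => simp
    | (j+1) => rw [Walk.map_cons, Walk.getVert_cons_succ, Walk.getVert_cons_succ, ih]

lemma nb_map (f : G →g G') (hf : Function.Injective f) {u v : V} (p : G.Walk u v)
    (hp : NB p) : NB (p.map f) := by
  intro i hi
  rw [getVert_map, getVert_map]
  intro hcon
  exact hp i (by simpa using hi) (hf hcon)

lemma IsPath.getVert_ne {u v : V} {p : G.Walk u v} (hp : p.IsPath) :
    ∀ {i j : ℕ}, i < j → j ≤ p.length → p.getVert i ≠ p.getVert j := by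
  induction p with
  | nil => intro i j hij hj; simp at hj; omega
  | cons h p ih =>
    rw [Walk.cons_isPath_iff] at hp
    intro i j hij hj
    match i, j with
    | 0, (j+1) =>
      rw [Walk.getVert_zero, Walk.getVert_cons_succ]
      intro hcon
      exact hp.2 (Walk.mem_support_iff_exists_getVert.mpr
        ⟨j, hcon.symm, by simpa [Walk.length_cons] using hj⟩)
    | (i+1), (j+1) =>
      rw [Walk.getVert_cons_succ, Walk.getVert_cons_succ]
      exact ih hp.1 (by omega) (by simpa [Walk.length_cons] using hj)

lemma NB.isPath (hac : G.IsAcyclic) {u v : V} (p : G.Walk u v) (hp : NB p) :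
    p.IsPath := by
  classical
  induction p with
  | nil => simp
  | cons h p ih =>
    rename_i a b c
    have hpath : p.IsPath := ih (nb_of_cons hp)
    rw [Walk.cons_isPath_iff]
    refine ⟨hpath, fun hmem => ?_⟩
    set r := p.takeUntil a hmem with hr
    have hrpath : r.IsPath := hpath.takeUntil hmem
    have hedge : s(a, b) ∉ r.edges := by
      intro he
      have he' : s(a, b) ∈ p.edges := Walk.edges_takeUntil_subset _ _ he
      cases p with
      | nil => simp at he'
      | cons h2 q =>
        rename_i d
        rw [Walk.edges_cons, List.mem_cons] at he'
        rcases he' with he' | he'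
        · have : a = d := by
            rw [Sym2.eq_iff] at he'
            rcases he' with ⟨h1, _⟩ | ⟨h1, _⟩
            · exact absurd h1 h.ne
            · exact h1
          subst this
          exact hp 0 (by simp [Walk.length_cons])
            (by simp [Walk.getVert_zero, Walk.getVert_cons_succ])
        · have : b ∈ q.support := Walk.snd_mem_support_of_mem_edges q he'
          rw [Walk.cons_isPath_iff] at hpath
          exact hpath.2 this
    have hcyc : (Walk.cons h r).IsCycle :=
      (Walk.cons_isCycle_iff r h).mpr ⟨hrpath, hedge⟩
    exact hac _ hcyc



/-- Alternating words: first letter in `S`, then alternating `T`, `S`, ... -/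
inductive Alt {Γ : Type*} : Set Γ → Set Γ → List Γ → Prop
  | single {S T : Set Γ} {a : Γ} (ha : a ∈ S) : Alt S T [a]
  | cons {S T : Set Γ} {a : Γ} {l : List Γ} (ha : a ∈ S) (hl : Alt T S l) :
      Alt S T (a :: l)

variable {Γ : Type*} [Group Γ]

lemma Alt.letters {S T : Set Γ} {l : List Γ} (h : Alt S T l) :
    ∀ a ∈ l, a ∈ S ∪ T := by
  induction h with
  | single ha => intro b hb; rw [List.mem_singleton] at hb; subst hb; exact Or.inl ha
  | @cons S' T' a l ha hl ih =>
    intro b hb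
    rcases List.mem_cons.mp hb with rfl | hb
    · exact Or.inl ha
    · rcases ih b hb with h | h
      · exact Or.inr h
      · exact Or.inl h

lemma Alt.length_pos {S T : Set Γ} {l : List Γ} (h : Alt S T l) : 1 ≤ l.length := by
  cases h <;> simp

/-- The "half-coset" letters. -/
def SS (A P : Subgroup Γ) : Set Γ := {a | a ∈ A ∧ a ∉ P}

/-- Normal forms for elements of `⟨P₁, P₂⟩`. -/
def NF (P A B : Subgroup Γ) (q : Γ) : Prop :=
  q ∈ A ∨ q ∈ B ∨ ∃ l : List Γ, 2 ≤ l.length ∧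
    (Alt (SS A P) (SS B P) l ∨ Alt (SS B P) (SS A P) l) ∧ q = l.prod

lemma nf_symm {P A B : Subgroup Γ} {q : Γ} (h : NF P A B q) : NF P B A q := by
  rcases h with h | h | ⟨l, h1, h2, h3⟩
  · exact Or.inr (Or.inl h)
  · exact Or.inl h
  · exact Or.inr (Or.inr ⟨l, h1, h2.symm, h3⟩)

lemma leftMulAux (P : Subgroup Γ) :
    ∀ n (A B : Subgroup Γ), P ≤ A → P ≤ B → ∀ l : List Γ, l.length = n →
      Alt (SS A P) (SS B P) l → ∀ x : Γ, (x ∈ A ∨ x ∈ B) →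
      NF P A B (x * l.prod) := by
  intro n
  induction n using Nat.strong_induction_on with
  | _ n ih =>
    intro A B hA hB l hlen halt x hx
    have keyA : ∀ y : Γ, y ∈ A → NF P A B (y * l.prod) := by
      intro y hyA
      cases halt with
      | @single S' T' a ha =>
        rw [List.prod_singleton]
        exact Or.inl (mul_mem hyA ha.1)
      | @cons S' T' a l' ha hl' =>
        rw [List.prod_cons, ← mul_assoc]
        by_cases hyP : y * a ∈ P
        · have hlt : l'.length < n := by
            subst hlen; simp
          have := ih l'.length hlt B A hB hA l' rfl hl' (y * a) (Or.inr (mul_mem hyA ha.1))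
          exact nf_symm this
        · have halt' : Alt (SS A P) (SS B P) ((y * a) :: l') :=
            Alt.cons ⟨mul_mem hyA ha.1, hyP⟩ hl'
          refine Or.inr (Or.inr ⟨(y * a) :: l', ?_, Or.inl halt', ?_⟩)
          · have := hl'.length_pos; simp; omega
          · rw [List.prod_cons]
    rcases hx with hxA | hxB
    · exact keyA x hxA
    · by_cases hxP : x ∈ P
      · exact keyA x (hA hxP)
      · have halt' : Alt (SS B P) (SS A P) (x :: l) := Alt.cons ⟨hxB, hxP⟩ halt
        refine Or.inr (Or.inr ⟨x :: l, ?_, Or.inr halt', ?_⟩)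
        · have := halt.length_pos; simp; omega
        · rw [List.prod_cons]

lemma nf_leftMul {P A B : Subgroup Γ} (hA : P ≤ A) (hB : P ≤ B) {x y : Γ}
    (hx : x ∈ A ∨ x ∈ B) (hy : NF P A B y) : NF P A B (x * y) := by
  have pair : ∀ (A' B' : Subgroup Γ), P ≤ A' → P ≤ B' → ∀ x' y' : Γ,
      (x' ∈ A' ∨ x' ∈ B') → y' ∈ A' → NF P A' B' (x' * y') := by
    intro A' B' hA' hB' x' y' hx' hy'
    rcases hx' with hx' | hx'
    · exact Or.inl (mul_mem hx' hy')
    · by_cases hxP : x' ∈ P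
      · exact Or.inl (mul_mem (hA' hxP) hy')
      · by_cases hyP : y' ∈ P
        · exact Or.inr (Or.inl (mul_mem hx' (hB' hyP)))
        · refine Or.inr (Or.inr ⟨[x', y'], by simp, Or.inr ?_, by simp⟩)
          exact Alt.cons ⟨hx', hxP⟩ (Alt.single ⟨hy', hyP⟩)
  rcases hy with hy | hy | ⟨l, _, h2, rfl⟩
  · exact pair A B hA hB x y hx hy
  · exact nf_symm (pair B A hB hA x y hx.symm hy)
  · rcases h2 with h2 | h2
    · exact leftMulAux P l.length A B hA hB l rfl h2 x hx
    · exact nf_symm (leftMulAux P l.length B A hB hA l rfl h2 x hx.symm)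

lemma nf_listMul {P A B : Subgroup Γ} (hA : P ≤ A) (hB : P ≤ B) :
    ∀ l : List Γ, (∀ a ∈ l, a ∈ A ∨ a ∈ B) → ∀ y : Γ, NF P A B y →
      NF P A B (l.prod * y) := by
  intro l
  induction l with
  | nil => intro _ y hy; simpa using hy
  | cons a l ih =>
    intro hmem y hy
    rw [List.prod_cons, mul_assoc]
    exact nf_leftMul hA hB (hmem a List.mem_cons_self)
      (ih (fun b hb => hmem b (List.mem_cons_of_mem a hb)) y hy)

lemma nf_toList {P A B : Subgroup Γ} {q : Γ} (h : NF P A B q) :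
    ∃ l : List Γ, (∀ a ∈ l, a ∈ A ∨ a ∈ B) ∧ q = l.prod := by
  rcases h with h | h | ⟨l, _, h2, rfl⟩
  · exact ⟨[q], by simpa using Or.inl h, by simp⟩
  · exact ⟨[q], by simpa using Or.inr h, by simp⟩
  · refine ⟨l, fun a ha => ?_, rfl⟩
    have := h2.elim (fun h' => h'.letters a ha) (fun h' => (h'.letters a ha).symm)
    rcases this with h' | h'
    · exact Or.inl h'.1
    · exact Or.inr h'.1

lemma nf_one {P A B : Subgroup Γ} : NF P A B 1 := Or.inl (one_mem A)

lemma nf_mul {P A B : Subgroup Γ} (hA : P ≤ A) (hB : P ≤ B) {x y : Γ}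
    (hx : NF P A B x) (hy : NF P A B y) : NF P A B (x * y) := by
  obtain ⟨l, hl, rfl⟩ := nf_toList hx
  exact nf_listMul hA hB l hl y hy

lemma nf_inv {P A B : Subgroup Γ} (hA : P ≤ A) (hB : P ≤ B) {x : Γ}
    (hx : NF P A B x) : NF P A B x⁻¹ := by
  obtain ⟨l, hl, rfl⟩ := nf_toList hx
  rw [List.prod_inv_reverse, ← mul_one ((l.map fun a => a⁻¹).reverse.prod)]
  refine nf_listMul hA hB _ ?_ 1 nf_one
  intro a ha
  rw [List.mem_reverse, List.mem_map] at ha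
  obtain ⟨b, hb, rfl⟩ := ha
  rcases hl b hb with h | h
  · exact Or.inl (inv_mem h)
  · exact Or.inr (inv_mem h)

lemma nf_of_mem_closure {P A B : Subgroup Γ} (hA : P ≤ A) (hB : P ≤ B) {q : Γ}
    (hq : q ∈ Subgroup.closure ((A : Set Γ) ∪ B)) : NF P A B q := by
  refine Subgroup.closure_induction (fun x hx => ?_) nf_one
    (fun x y _ _ hx hy => nf_mul hA hB hx hy) (fun x _ hx => nf_inv hA hB hx) hq
  rcases hx with hx | hx
  · exact Or.inl hx
  · exact Or.inr (Or.inl hx)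



variable {Γ : Type*} [Group Γ] (G₁ G₂ : Subgroup Γ)

def vl (γ : Γ) : (Γ ⧸ G₁) ⊕ (Γ ⧸ G₂) := Sum.inl (QuotientGroup.mk γ)
def vr (γ : Γ) : (Γ ⧸ G₁) ⊕ (Γ ⧸ G₂) := Sum.inr (QuotientGroup.mk γ)

variable {G₁ G₂}

lemma vl_eq_vl {x y : Γ} : vl G₁ G₂ x = vl G₁ G₂ y ↔ x⁻¹ * y ∈ G₁ := by
  rw [vl, vl, Sum.inl.injEq, QuotientGroup.eq]

lemma vr_eq_vr {x y : Γ} : vr G₁ G₂ x = vr G₁ G₂ y ↔ x⁻¹ * y ∈ G₂ := by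
  rw [vr, vr, Sum.inr.injEq, QuotientGroup.eq]

lemma vl_ne_vr {x y : Γ} : vl G₁ G₂ x ≠ vr G₁ G₂ y := by
  simp [vl, vr]

lemma bsSmul_vl (γ x : Γ) : bsSmul (A := G₁) (B := G₂) γ (vl G₁ G₂ x) = vl G₁ G₂ (γ * x) := rfl
lemma bsSmul_vr (γ x : Γ) : bsSmul (A := G₁) (B := G₂) γ (vr G₁ G₂ x) = vr G₁ G₂ (γ * x) := rfl

lemma adj_of (γ x y : Γ) (h1 : x⁻¹ * γ ∈ G₁) (h2 : y⁻¹ * γ ∈ G₂) :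
    (BassSerreGraph Γ G₁ G₂).Adj (vl G₁ G₂ x) (vr G₁ G₂ y) :=
  ⟨γ, Or.inl ⟨by rw [vl, Sum.inl.injEq, QuotientGroup.eq]; exact h1,
      by rw [vr, Sum.inr.injEq, QuotientGroup.eq]; exact h2⟩⟩

lemma adj_elim {x y : Γ} (h : (BassSerreGraph Γ G₁ G₂).Adj (vl G₁ G₂ x) (vr G₁ G₂ y)) :
    ∃ γ : Γ, x⁻¹ * γ ∈ G₁ ∧ y⁻¹ * γ ∈ G₂ := by
  obtain ⟨γ, ⟨h1, h2⟩ | ⟨h1, h2⟩⟩ := h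
  · exact ⟨γ, QuotientGroup.eq.mp (Sum.inl.injEq _ _ ▸ h1 : _),
      QuotientGroup.eq.mp (Sum.inr.injEq _ _ ▸ h2 : _)⟩
  · exact absurd h1 (by simp [vr])

def bsHom (γ : Γ) : BassSerreGraph Γ G₁ G₂ →g BassSerreGraph Γ G₁ G₂ where
  toFun := bsSmul γ
  map_rel' := by
    rintro u v ⟨δ, ⟨rfl, rfl⟩ | ⟨rfl, rfl⟩⟩
    · exact ⟨γ * δ, Or.inl ⟨rfl, rfl⟩⟩
    · exact ⟨γ * δ, Or.inr ⟨rfl, rfl⟩⟩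

lemma bsHom_apply (γ : Γ) (u : (Γ ⧸ G₁) ⊕ (Γ ⧸ G₂)) : bsHom γ u = bsSmul γ u := rfl

lemma bsSmul_injective (γ : Γ) : Function.Injective (bsSmul (A := G₁) (B := G₂) γ) := by
  intro u v h
  cases u <;> cases v <;> simp [bsSmul] at h ⊢ <;>
    first
      | exact smul_left_cancel γ h
      | exact h

lemma bsSmul_mul (γ δ : Γ) (u : (Γ ⧸ G₁) ⊕ (Γ ⧸ G₂)) :
    bsSmul γ (bsSmul δ u) = bsSmul (γ * δ) u := by
  cases u <;> simp [bsSmul, mul_smul]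

end BSAux

namespace BSAux
open SimpleGraph

variable {Γ : Type*} [Group Γ] {G₁ G₂ P P₁ P₂ : Subgroup Γ}

lemma S_not_G₂ (hP : G₁ ⊓ G₂ = P) (hP₁ : P₁ ≤ G₁) {a : Γ} (ha : a ∈ SS P₁ P) :
    a ∉ G₂ := fun h => ha.2 (hP ▸ (⟨hP₁ ha.1, h⟩ : a ∈ G₁ ⊓ G₂))

lemma T_not_G₁ (hP : G₁ ⊓ G₂ = P) (hP₂ : P₂ ≤ G₂) {a : Γ} (ha : a ∈ SS P₂ P) :
    a ∉ G₁ := fun h => ha.2 (hP ▸ (⟨h, hP₂ ha.1⟩ : a ∈ G₁ ⊓ G₂))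

lemma master (hP : G₁ ⊓ G₂ = P) (hP₁ : P₁ ≤ G₁) (hP₂ : P₂ ≤ G₂) :
    ∀ n (l : List Γ), l.length = n →
    (Alt (SS P₁ P) (SS P₂ P) l →
      ∃ w' a' : Γ, l.prod = w' * a' ∧
        ((a' ∈ SS P₁ P ∧ ∃ p : (BassSerreGraph Γ G₁ G₂).Walk (vr G₁ G₂ 1) (vr G₁ G₂ l.prod),
            NB p ∧ p.length = n + 1 ∧ p.getVert 1 = vl G₁ G₂ 1 ∧ p.getVert n = vl G₁ G₂ w') ∨
         (a' ∈ SS P₂ P ∧ ∃ p : (BassSerreGraph Γ G₁ G₂).Walk (vr G₁ G₂ 1) (vl G₁ G₂ l.prod),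
            NB p ∧ p.length = n + 1 ∧ p.getVert 1 = vl G₁ G₂ 1 ∧ p.getVert n = vr G₁ G₂ w'))) ∧
    (Alt (SS P₂ P) (SS P₁ P) l →
      ∃ w' a' : Γ, l.prod = w' * a' ∧
        ((a' ∈ SS P₂ P ∧ ∃ p : (BassSerreGraph Γ G₁ G₂).Walk (vl G₁ G₂ 1) (vl G₁ G₂ l.prod),
            NB p ∧ p.length = n + 1 ∧ p.getVert 1 = vr G₁ G₂ 1 ∧ p.getVert n = vr G₁ G₂ w') ∨
         (a' ∈ SS P₁ P ∧ ∃ p : (BassSerreGraph Γ G₁ G₂).Walk (vl G₁ G₂ 1) (vr G₁ G₂ l.prod),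
            NB p ∧ p.length = n + 1 ∧ p.getVert 1 = vr G₁ G₂ 1 ∧ p.getVert n = vl G₁ G₂ w'))) := by
  have h0 : (BassSerreGraph Γ G₁ G₂).Adj (vr G₁ G₂ 1) (vl G₁ G₂ 1) :=
    (adj_of 1 1 1 (by simpa using one_mem G₁) (by simpa using one_mem G₂)).symm
  intro n
  induction n using Nat.strong_induction_on with
  | _ n ih =>
    intro l hlen
    constructor
    · intro halt
      cases halt with
      | @single S' T' a ha =>
        simp only [List.length_singleton] at hlen
        subst hlen
        have h1 : (BassSerreGraph Γ G₁ G₂).Adj (vl G₁ G₂ 1) (vr G₁ G₂ a) :=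
          adj_of a 1 a (by simpa using hP₁ ha.1) (by simpa using one_mem G₂)
        refine ⟨1, a, by simp, Or.inl ⟨ha, (Walk.cons h0 (Walk.cons h1 Walk.nil)).copy rfl
          (by rw [List.prod_singleton]), ?_, by exact (Walk.length_copy _ _ _).trans rfl, ?_, ?_⟩⟩
        · refine nb_copy _ _ _ (nb_cons h0 _ (nb_cons h1 _ nb_nil ?_) ?_)
          · exact vl_ne_vr
          · simp only [Walk.getVert_cons_succ, Walk.getVert_zero]
            rw [Ne, vr_eq_vr]
            intro hcon
            exact S_not_G₂ hP hP₁ ha (by simpa using hcon)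
        · rw [Walk.getVert_copy]
          exact (Walk.getVert_cons_succ (n := 0) _ h0).trans (Walk.getVert_zero _)
        · rw [Walk.getVert_copy]
          exact (Walk.getVert_cons_succ (n := 0) _ h0).trans (Walk.getVert_zero _)
      | @cons S' T' a l' ha hl' =>
        simp only [List.length_cons] at hlen
        have hlt : l'.length < n := by omega
        obtain ⟨w'', a'', hdec, hcase⟩ := (ih l'.length hlt l' rfl).2 hl'
        have haG₁ : a ∈ G₁ := hP₁ ha.1
        have hstart : (bsHom (G₁ := G₁) (G₂ := G₂) a) (vl G₁ G₂ 1) = vl G₁ G₂ 1 := by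
          show vl G₁ G₂ (a * 1) = vl G₁ G₂ 1
          rw [vl_eq_vl]
          simpa using inv_mem haG₁
        rcases hcase with ⟨ha'', p', hnb, hplen, hv1, hvn⟩ | ⟨ha'', p', hnb, hplen, hv1, hvn⟩
        · -- a'' ∈ SS P₂ P : p' : Walk (vl 1) (vl l'.prod) ends on the left
          have hend : (bsHom (G₁ := G₁) (G₂ := G₂) a) (vl G₁ G₂ l'.prod)
              = vl G₁ G₂ (a :: l').prod := by
            show vl G₁ G₂ (a * l'.prod) = _
            rw [List.prod_cons]
          refine ⟨a * w'', a'', by rw [List.prod_cons, hdec, mul_assoc], Or.inr ⟨ha'',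
            Walk.cons h0 ((p'.map (bsHom a)).copy hstart hend), ?_, ?_, ?_, ?_⟩⟩
          · refine nb_cons h0 _ (nb_copy _ _ _ (nb_map _ (bsSmul_injective a) _ hnb)) ?_
            rw [Walk.getVert_copy, getVert_map, hv1]
            show vr G₁ G₂ 1 ≠ vr G₁ G₂ (a * 1)
            rw [Ne, vr_eq_vr]
            intro hcon
            exact S_not_G₂ hP hP₁ ha (by simpa using hcon)
          · exact (congrArg (· + 1) ((Walk.length_copy _ _ _).trans ((Walk.length_map _ _).trans hplen))).trans (show l'.length + 1 + 1 = n + 1 by omega)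
          · exact (Walk.getVert_cons_succ (n := 0) _ h0).trans (Walk.getVert_zero _)
          · have hn : n = l'.length + 1 := by omega
            rw [hn]
            simp only [Walk.getVert_cons_succ, Walk.getVert_copy, getVert_map, hvn]
            rfl
        · -- a'' ∈ SS P₁ P : p' : Walk (vl 1) (vr l'.prod) ends on the right
          have hend : (bsHom (G₁ := G₁) (G₂ := G₂) a) (vr G₁ G₂ l'.prod)
              = vr G₁ G₂ (a :: l').prod := by
            show vr G₁ G₂ (a * l'.prod) = _
            rw [List.prod_cons]
          refine ⟨a * w'', a'', by rw [List.prod_cons, hdec, mul_assoc], Or.inl ⟨ha'',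
            Walk.cons h0 ((p'.map (bsHom a)).copy hstart hend), ?_, ?_, ?_, ?_⟩⟩
          · refine nb_cons h0 _ (nb_copy _ _ _ (nb_map _ (bsSmul_injective a) _ hnb)) ?_
            rw [Walk.getVert_copy, getVert_map, hv1]
            show vr G₁ G₂ 1 ≠ vr G₁ G₂ (a * 1)
            rw [Ne, vr_eq_vr]
            intro hcon
            exact S_not_G₂ hP hP₁ ha (by simpa using hcon)
          · exact (congrArg (· + 1) ((Walk.length_copy _ _ _).trans ((Walk.length_map _ _).trans hplen))).trans (show l'.length + 1 + 1 = n + 1 by omega)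
          · exact (Walk.getVert_cons_succ (n := 0) _ h0).trans (Walk.getVert_zero _)
          · have hn : n = l'.length + 1 := by omega
            rw [hn]
            simp only [Walk.getVert_cons_succ, Walk.getVert_copy, getVert_map, hvn]
            rfl
    · intro halt
      cases halt with
      | @single S' T' a ha =>
        simp only [List.length_singleton] at hlen
        subst hlen
        have h1 : (BassSerreGraph Γ G₁ G₂).Adj (vr G₁ G₂ 1) (vl G₁ G₂ a) :=
          (adj_of a a 1 (by simpa using one_mem G₁) (by simpa using hP₂ ha.1)).symm
        refine ⟨1, a, by simp, Or.inl ⟨ha, (Walk.cons h0.symm (Walk.cons h1 Walk.nil)).copy rfl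
          (by rw [List.prod_singleton]), ?_, by exact (Walk.length_copy _ _ _).trans rfl, ?_, ?_⟩⟩
        · refine nb_copy _ _ _ (nb_cons h0.symm _ (nb_cons h1 _ nb_nil ?_) ?_)
          · exact fun hc => vl_ne_vr hc.symm
          · simp only [Walk.getVert_cons_succ, Walk.getVert_zero]
            rw [Ne, vl_eq_vl]
            intro hcon
            exact T_not_G₁ hP hP₂ ha (by simpa using hcon)
        · rw [Walk.getVert_copy]
          exact (Walk.getVert_cons_succ (n := 0) _ h0.symm).trans (Walk.getVert_zero _)
        · rw [Walk.getVert_copy]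
          exact (Walk.getVert_cons_succ (n := 0) _ h0.symm).trans (Walk.getVert_zero _)
      | @cons S' T' a l' ha hl' =>
        simp only [List.length_cons] at hlen
        have hlt : l'.length < n := by omega
        obtain ⟨w'', a'', hdec, hcase⟩ := (ih l'.length hlt l' rfl).1 hl'
        have haG₂ : a ∈ G₂ := hP₂ ha.1
        have hstart : (bsHom (G₁ := G₁) (G₂ := G₂) a) (vr G₁ G₂ 1) = vr G₁ G₂ 1 := by
          show vr G₁ G₂ (a * 1) = vr G₁ G₂ 1
          rw [vr_eq_vr]
          simpa using inv_mem haG₂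
        rcases hcase with ⟨ha'', p', hnb, hplen, hv1, hvn⟩ | ⟨ha'', p', hnb, hplen, hv1, hvn⟩
        · -- a'' ∈ SS P₁ P : p' : Walk (vr 1) (vr l'.prod)
          have hend : (bsHom (G₁ := G₁) (G₂ := G₂) a) (vr G₁ G₂ l'.prod)
              = vr G₁ G₂ (a :: l').prod := by
            show vr G₁ G₂ (a * l'.prod) = _
            rw [List.prod_cons]
          refine ⟨a * w'', a'', by rw [List.prod_cons, hdec, mul_assoc], Or.inr ⟨ha'',
            Walk.cons h0.symm ((p'.map (bsHom a)).copy hstart hend), ?_, ?_, ?_, ?_⟩⟩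
          · refine nb_cons h0.symm _ (nb_copy _ _ _ (nb_map _ (bsSmul_injective a) _ hnb)) ?_
            rw [Walk.getVert_copy, getVert_map, hv1]
            show vl G₁ G₂ 1 ≠ vl G₁ G₂ (a * 1)
            rw [Ne, vl_eq_vl]
            intro hcon
            exact T_not_G₁ hP hP₂ ha (by simpa using hcon)
          · exact (congrArg (· + 1) ((Walk.length_copy _ _ _).trans ((Walk.length_map _ _).trans hplen))).trans (show l'.length + 1 + 1 = n + 1 by omega)
          · exact (Walk.getVert_cons_succ (n := 0) _ h0.symm).trans (Walk.getVert_zero _)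
          · have hn : n = l'.length + 1 := by omega
            rw [hn]
            simp only [Walk.getVert_cons_succ, Walk.getVert_copy, getVert_map, hvn]
            rfl
        · -- a'' ∈ SS P₂ P : p' : Walk (vr 1) (vl l'.prod)
          have hend : (bsHom (G₁ := G₁) (G₂ := G₂) a) (vl G₁ G₂ l'.prod)
              = vl G₁ G₂ (a :: l').prod := by
            show vl G₁ G₂ (a * l'.prod) = _
            rw [List.prod_cons]
          refine ⟨a * w'', a'', by rw [List.prod_cons, hdec, mul_assoc], Or.inl ⟨ha'',
            Walk.cons h0.symm ((p'.map (bsHom a)).copy hstart hend), ?_, ?_, ?_, ?_⟩⟩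
          · refine nb_cons h0.symm _ (nb_copy _ _ _ (nb_map _ (bsSmul_injective a) _ hnb)) ?_
            rw [Walk.getVert_copy, getVert_map, hv1]
            show vl G₁ G₂ 1 ≠ vl G₁ G₂ (a * 1)
            rw [Ne, vl_eq_vl]
            intro hcon
            exact T_not_G₁ hP hP₂ ha (by simpa using hcon)
          · exact (congrArg (· + 1) ((Walk.length_copy _ _ _).trans ((Walk.length_map _ _).trans hplen))).trans (show l'.length + 1 + 1 = n + 1 by omega)
          · exact (Walk.getVert_cons_succ (n := 0) _ h0.symm).trans (Walk.getVert_zero _)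
          · have hn : n = l'.length + 1 := by omega
            rw [hn]
            simp only [Walk.getVert_cons_succ, Walk.getVert_copy, getVert_map, hvn]
            rfl

end BSAux
namespace BSAux
open SimpleGraph

variable {V : Type*} {G : SimpleGraph V}

lemma isPath1 {u v : V} (h : G.Adj u v) : (Walk.cons h Walk.nil).IsPath := by
  simp [Walk.cons_isPath_iff, h.ne]

lemma isPath2 {u v w : V} (h1 : G.Adj u v) (h2 : G.Adj v w) (huw : u ≠ w) :
    (Walk.cons h1 (Walk.cons h2 Walk.nil)).IsPath := by
  simp [Walk.cons_isPath_iff, h1.ne, h2.ne, huw]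

lemma isPath3 {u v w x : V} (h1 : G.Adj u v) (h2 : G.Adj v w) (h3 : G.Adj w x)
    (huw : u ≠ w) (hvx : v ≠ x) (hux : u ≠ x) :
    (Walk.cons h1 (Walk.cons h2 (Walk.cons h3 Walk.nil))).IsPath := by
  simp [Walk.cons_isPath_iff, h1.ne, h2.ne, h3.ne, huw, hvx, hux]

end BSAux
namespace BSAux
open SimpleGraph

variable {Γ : Type*} [Group Γ] {G₁ G₂ P P₁ P₂ : Subgroup Γ}

lemma factA (hP : G₁ ⊓ G₂ = P) (hPP₁ : P ≤ P₁) (hP₁ : P₁ ≤ G₁) (hP₂ : P₂ ≤ G₂)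
    (hac : (BassSerreGraph Γ G₁ G₂).IsAcyclic) {q : Γ}
    (hq : NF P P₁ P₂ q) (hG : q ∈ G₁) : q ∈ P₁ := by
  rcases hq with hq | hq | ⟨l, hlen2, halt, rfl⟩
  · exact hq
  · exact hPP₁ (hP ▸ (⟨hG, hP₂ hq⟩ : q ∈ G₁ ⊓ G₂))
  exfalso
  rcases halt with halt | halt
  · obtain ⟨w', a', hdec, hcase⟩ := (master hP hP₁ hP₂ l.length l rfl).1 halt
    rcases hcase with ⟨haS, p, hnb, hplen, hv1, hvn⟩ | ⟨haT, p, hnb, hplen, hv1, hvn⟩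
    · have hpath := NB.isPath hac p hnb
      have hw' : w' ∈ G₁ := by
        have : w' = l.prod * a'⁻¹ := by rw [hdec, mul_assoc, mul_inv_cancel, mul_one]
        rw [this]
        exact mul_mem hG (inv_mem (hP₁ haS.1))
      have heq : p.getVert 1 = p.getVert l.length := by
        rw [hv1, hvn, vl_eq_vl]
        simpa using inv_mem hw'
      exact IsPath.getVert_ne hpath (by omega) (by omega) heq
    · have hpath := NB.isPath hac p hnb
      have hend : p.getVert (l.length + 1) = vl G₁ G₂ l.prod := by
        rw [← hplen]; exact p.getVert_length
      have heq : p.getVert 1 = p.getVert (l.length + 1) := by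
        rw [hv1, hend, vl_eq_vl]
        simpa using hG
      exact IsPath.getVert_ne hpath (by omega) (by omega) heq
  · obtain ⟨w', a', hdec, hcase⟩ := (master hP hP₁ hP₂ l.length l rfl).2 halt
    rcases hcase with ⟨haT, p, hnb, hplen, hv1, hvn⟩ | ⟨haS, p, hnb, hplen, hv1, hvn⟩
    · have hpath := NB.isPath hac p hnb
      have hend : p.getVert (l.length + 1) = vl G₁ G₂ l.prod := by
        rw [← hplen]; exact p.getVert_length
      have heq : p.getVert 0 = p.getVert (l.length + 1) := by
        rw [p.getVert_zero, hend, vl_eq_vl]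
        simpa using hG
      exact IsPath.getVert_ne hpath (by omega) (by omega) heq
    · have hpath := NB.isPath hac p hnb
      have hw' : w' ∈ G₁ := by
        have : w' = l.prod * a'⁻¹ := by rw [hdec, mul_assoc, mul_inv_cancel, mul_one]
        rw [this]
        exact mul_mem hG (inv_mem (hP₁ haS.1))
      have heq : p.getVert 0 = p.getVert l.length := by
        rw [p.getVert_zero, hvn, vl_eq_vl]
        simpa using hw'
      exact IsPath.getVert_ne hpath (by omega) (by omega) heq

lemma factB (hP : G₁ ⊓ G₂ = P) (hPP₂ : P ≤ P₂) (hP₁ : P₁ ≤ G₁) (hP₂ : P₂ ≤ G₂)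
    (hac : (BassSerreGraph Γ G₁ G₂).IsAcyclic) {q : Γ}
    (hq : NF P P₁ P₂ q) (hG : q ∈ G₂) : q ∈ P₂ := by
  rcases hq with hq | hq | ⟨l, hlen2, halt, rfl⟩
  · exact hPP₂ (hP ▸ (⟨hP₁ hq, hG⟩ : q ∈ G₁ ⊓ G₂))
  · exact hq
  exfalso
  rcases halt with halt | halt
  · obtain ⟨w', a', hdec, hcase⟩ := (master hP hP₁ hP₂ l.length l rfl).1 halt
    rcases hcase with ⟨haS, p, hnb, hplen, hv1, hvn⟩ | ⟨haT, p, hnb, hplen, hv1, hvn⟩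
    · have hpath := NB.isPath hac p hnb
      have hend : p.getVert (l.length + 1) = vr G₁ G₂ l.prod := by
        rw [← hplen]; exact p.getVert_length
      have heq : p.getVert 0 = p.getVert (l.length + 1) := by
        rw [p.getVert_zero, hend, vr_eq_vr]
        simpa using hG
      exact IsPath.getVert_ne hpath (by omega) (by omega) heq
    · have hpath := NB.isPath hac p hnb
      have hw' : w' ∈ G₂ := by
        have : w' = l.prod * a'⁻¹ := by rw [hdec, mul_assoc, mul_inv_cancel, mul_one]
        rw [this]
        exact mul_mem hG (inv_mem (hP₂ haT.1))
      have heq : p.getVert 0 = p.getVert l.length := by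
        rw [p.getVert_zero, hvn, vr_eq_vr]
        simpa using hw'
      exact IsPath.getVert_ne hpath (by omega) (by omega) heq
  · obtain ⟨w', a', hdec, hcase⟩ := (master hP hP₁ hP₂ l.length l rfl).2 halt
    rcases hcase with ⟨haT, p, hnb, hplen, hv1, hvn⟩ | ⟨haS, p, hnb, hplen, hv1, hvn⟩
    · have hpath := NB.isPath hac p hnb
      have hw' : w' ∈ G₂ := by
        have : w' = l.prod * a'⁻¹ := by rw [hdec, mul_assoc, mul_inv_cancel, mul_one]
        rw [this]
        exact mul_mem hG (inv_mem (hP₂ haT.1))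
      have heq : p.getVert 1 = p.getVert l.length := by
        rw [hv1, hvn, vr_eq_vr]
        simpa using inv_mem hw'
      exact IsPath.getVert_ne hpath (by omega) (by omega) heq
    · have hpath := NB.isPath hac p hnb
      have hend : p.getVert (l.length + 1) = vr G₁ G₂ l.prod := by
        rw [← hplen]; exact p.getVert_length
      have heq : p.getVert 1 = p.getVert (l.length + 1) := by
        rw [hv1, hend, vr_eq_vr]
        simpa using hG
      exact IsPath.getVert_ne hpath (by omega) (by omega) heq

lemma factC (hP : G₁ ⊓ G₂ = P) (hPP₁ : P ≤ P₁) (hPP₂ : P ≤ P₂)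
    (hP₁ : P₁ ≤ G₁) (hP₂ : P₂ ≤ G₂)
    (hac : (BassSerreGraph Γ G₁ G₂).IsAcyclic) {q g h : Γ}
    (hq : NF P P₁ P₂ q) (hg : g ∈ G₁) (hh : h ∈ G₂) (heq : q = g * h) :
    ∃ p₁ p₂ : Γ, p₁ ∈ P₁ ∧ p₂ ∈ P₂ ∧ q = p₁ * p₂ := by
  classical
  have huniq := isAcyclic_iff_path_unique.mp hac
  by_cases hq1 : q ∈ G₁
  · exact ⟨q, 1, factA hP hPP₁ hP₁ hP₂ hac hq hq1, one_mem _, by rw [mul_one]⟩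
  by_cases hq2 : q ∈ G₂
  · exact ⟨1, q, one_mem _, factB hP hPP₂ hP₁ hP₂ hac hq hq2, by rw [one_mul]⟩
  rcases hq with hq | hq | ⟨l, hlen2, halt, rfl⟩
  · exact absurd (hP₁ hq) hq1
  · exact absurd (hP₂ hq) hq2
  -- the short-cut adjacency from `q = g * h`
  have hkey : (l.prod)⁻¹ * g ∈ G₂ := by
    rw [heq]
    simpa [mul_inv_rev, mul_assoc] using inv_mem hh
  have hadj1 : (BassSerreGraph Γ G₁ G₂).Adj (vl G₁ G₂ 1) (vr G₁ G₂ l.prod) :=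
    adj_of g 1 l.prod (by simpa using hg) hkey
  have hadjq : (BassSerreGraph Γ G₁ G₂).Adj (vl G₁ G₂ l.prod) (vr G₁ G₂ l.prod) :=
    adj_of l.prod l.prod l.prod (by simpa using one_mem G₁) (by simpa using one_mem G₂)
  have hadj0 : (BassSerreGraph Γ G₁ G₂).Adj (vr G₁ G₂ 1) (vl G₁ G₂ 1) :=
    (adj_of 1 1 1 (by simpa using one_mem G₁) (by simpa using one_mem G₂)).symm
  have hne_rq : vr G₁ G₂ 1 ≠ vr G₁ G₂ l.prod := by
    rw [Ne, vr_eq_vr]; intro hcon; exact hq2 (by simpa using hcon)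
  have hne_lq : vl G₁ G₂ 1 ≠ vl G₁ G₂ l.prod := by
    rw [Ne, vl_eq_vl]; intro hcon; exact hq1 (by simpa using hcon)
  have lengthEq : ∀ {u v : (Γ ⧸ G₁) ⊕ (Γ ⧸ G₂)}
      (p s : (BassSerreGraph Γ G₁ G₂).Walk u v), p.IsPath → s.IsPath →
      p.length = s.length := by
    intro u v p s hp hs
    have := huniq ⟨p, hp⟩ ⟨s, hs⟩
    exact congrArg (fun z : (BassSerreGraph Γ G₁ G₂).Path u v => z.1.length) this
  rcases halt with halt | halt
  · by_cases hn2 : l.length = 2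
    · -- direct: l = [a, b]
      cases halt with
      | @single S' T' a ha => simp at hn2
      | @cons S' T' a l' ha hl' =>
        cases hl' with
        | @single S'' T'' b hb => exact ⟨a, b, ha.1, hb.1, by simp⟩
        | @cons S'' T'' b l'' hb hl'' =>
          have := hl''.length_pos
          simp only [List.length_cons] at hn2
          omega
    · obtain ⟨w', a', hdec, hcase⟩ := (master hP hP₁ hP₂ l.length l rfl).1 halt
      rcases hcase with ⟨haS, p, hnb, hplen, hv1, hvn⟩ | ⟨haT, p, hnb, hplen, hv1, hvn⟩
      · have hpath := NB.isPath hac p hnb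
        have hs := isPath2 hadj0 hadj1 hne_rq
        have := lengthEq p _ hpath hs
        rw [hplen] at this
        simp only [Walk.length_cons, Walk.length_nil] at this
        omega
      · have hpath := NB.isPath hac p hnb
        have hs := isPath3 hadj0 hadj1 hadjq.symm hne_rq hne_lq (fun hc => vl_ne_vr hc.symm)
        have := lengthEq p _ hpath hs
        rw [hplen] at this
        simp only [Walk.length_cons, Walk.length_nil] at this
        omega
  · obtain ⟨w', a', hdec, hcase⟩ := (master hP hP₁ hP₂ l.length l rfl).2 halt
    rcases hcase with ⟨haT, p, hnb, hplen, hv1, hvn⟩ | ⟨haS, p, hnb, hplen, hv1, hvn⟩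
    · have hpath := NB.isPath hac p hnb
      have hs := isPath2 hadj1 hadjq.symm hne_lq
      have := lengthEq p _ hpath hs
      rw [hplen] at this
      simp only [Walk.length_cons, Walk.length_nil] at this
      omega
    · have hpath := NB.isPath hac p hnb
      have hs := isPath1 hadj1
      have := lengthEq p _ hpath hs
      rw [hplen] at this
      simp only [Walk.length_cons, Walk.length_nil] at this
      omega

end BSAux
open SimpleGraph BSAux in
theorem domain_is_bass_serre_tree_of_parabolic_amalgam
    (Γ : Type*) [Group Γ] (G₁ G₂ P P₁ P₂ : Subgroup Γ)
    (hP : G₁ ⊓ G₂ = P) (hPP₁ : P ≤ P₁) (hP₁ : P₁ ≤ G₁) (hPP₂ : P ≤ P₂) (hP₂ : P₂ ≤ G₂)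
    (hgen : Subgroup.closure ((G₁ : Set Γ) ∪ G₂) = ⊤)
    (htree : (BassSerreGraph Γ G₁ G₂).IsTree) :
    let Q : Subgroup Γ := Subgroup.closure ((P₁ : Set Γ) ∪ P₂)
    let D : Set ((Γ ⧸ G₁) ⊕ (Γ ⧸ G₂)) :=
      {w | ∃ q ∈ Q, w = Sum.inl (QuotientGroup.mk q) ∨ w = Sum.inr (QuotientGroup.mk q)}
    (∀ q ∈ Q, ∀ w ∈ D, bsSmul q w ∈ D) ∧
    IsSubtree (BassSerreGraph Γ G₁ G₂) D ∧
    (∃ e : ((Q ⧸ P₁.subgroupOf Q) ⊕ (Q ⧸ P₂.subgroupOf Q)) ≃ D,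
      (∀ u v, (BassSerreGraph Q (P₁.subgroupOf Q) (P₂.subgroupOf Q)).Adj u v ↔
        (BassSerreGraph Γ G₁ G₂).Adj (e u : (Γ ⧸ G₁) ⊕ (Γ ⧸ G₂)) (e v)) ∧
      (∀ (q : Q) (u : (Q ⧸ P₁.subgroupOf Q) ⊕ (Q ⧸ P₂.subgroupOf Q)),
        (e (bsSmul q u) : (Γ ⧸ G₁) ⊕ (Γ ⧸ G₂)) = bsSmul (q : Γ) (e u))) ∧
    (∀ w ∈ D, (∃ q ∈ Q, bsSmul q w = Sum.inl (QuotientGroup.mk 1)) ∨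
      (∃ q ∈ Q, bsSmul q w = Sum.inr (QuotientGroup.mk 1))) := by
  intro Q D
  have hac : (BassSerreGraph Γ G₁ G₂).IsAcyclic := htree.2
  have hNF : ∀ q ∈ Q, NF P P₁ P₂ q := fun q hq => nf_of_mem_closure hPP₁ hPP₂ hq
  have hQ1 : ∀ {x : Γ}, x ∈ P₁ → x ∈ Q := fun hx => Subgroup.subset_closure (Or.inl hx)
  have hQ2 : ∀ {x : Γ}, x ∈ P₂ → x ∈ Q := fun hx => Subgroup.subset_closure (Or.inr hx)
  -- Part 1: invariance
  have hInv : ∀ q ∈ Q, ∀ w ∈ D, bsSmul q w ∈ D := by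
    intro q hq w hw
    obtain ⟨x, hx, hc | hc⟩ := hw
    · subst hc; exact ⟨q * x, mul_mem hq hx, Or.inl rfl⟩
    · subst hc; exact ⟨q * x, mul_mem hq hx, Or.inr rfl⟩
  refine ⟨hInv, ?_, ?_, ?_⟩
  · -- Part 2: subtree
    have hwalkD : ∀ q ∈ Q, ∃ p : (BassSerreGraph Γ G₁ G₂).Walk (vl G₁ G₂ 1) (vl G₁ G₂ q),
        ∀ x ∈ p.support, x ∈ D := by
      intro q hq
      induction hq using Subgroup.closure_induction with
      | mem x hx =>
        rcases hx with hx | hx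
        · refine ⟨Walk.nil.copy rfl (vl_eq_vl.mpr (by simpa using hP₁ hx)), ?_⟩
          intro z hz
          rw [Walk.support_copy, Walk.support_nil, List.mem_singleton] at hz
          subst hz
          exact ⟨1, one_mem _, Or.inl rfl⟩
        · have a01 : (BassSerreGraph Γ G₁ G₂).Adj (vl G₁ G₂ 1) (vr G₁ G₂ 1) :=
            adj_of 1 1 1 (by simpa using one_mem G₁) (by simpa using one_mem G₂)
          have a2 : (BassSerreGraph Γ G₁ G₂).Adj (vr G₁ G₂ 1) (vl G₁ G₂ x) :=
            (adj_of x x 1 (by simpa using one_mem G₁) (by simpa using hP₂ hx)).symm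
          refine ⟨Walk.cons a01 (Walk.cons a2 Walk.nil), ?_⟩
          intro z hz
          simp only [Walk.support_cons, Walk.support_nil, List.mem_cons,
            List.mem_singleton] at hz
          rcases hz with rfl | rfl | rfl | h
          · exact ⟨1, one_mem _, Or.inl rfl⟩
          · exact ⟨1, one_mem _, Or.inr rfl⟩
          · exact ⟨x, hQ2 hx, Or.inl rfl⟩
          · exact absurd h List.not_mem_nil
      | one =>
        refine ⟨Walk.nil, ?_⟩
        intro z hz
        rw [Walk.support_nil, List.mem_singleton] at hz
        subst hz
        exact ⟨1, one_mem _, Or.inl rfl⟩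
      | mul x y hx hy ihx ihy =>
        obtain ⟨px, hpx⟩ := ihx
        obtain ⟨py, hpy⟩ := ihy
        refine ⟨px.append ((py.map (bsHom x)).copy
          (show vl G₁ G₂ (x * 1) = vl G₁ G₂ x by rw [mul_one]) rfl), ?_⟩
        intro z hz
        rw [Walk.mem_support_append_iff] at hz
        rcases hz with hz | hz
        · exact hpx z hz
        · replace hz := List.mem_map.mp (Eq.mp (congrArg (z ∈ ·) ((Walk.support_copy _ _ _).trans (Walk.support_map _ _))) hz)
          obtain ⟨w, hw, rfl⟩ := hz
          exact hInv x hx w (hpy w hw)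
      | inv x hx ihx =>
        obtain ⟨px, hpx⟩ := ihx
        refine ⟨(px.reverse.map (bsHom x⁻¹)).copy
          (show vl G₁ G₂ (x⁻¹ * x) = vl G₁ G₂ 1 by rw [inv_mul_cancel])
          (show vl G₁ G₂ (x⁻¹ * 1) = vl G₁ G₂ x⁻¹ by rw [mul_one]), ?_⟩
        intro z hz
        replace hz := List.mem_map.mp (Eq.mp (congrArg (z ∈ ·) ((Walk.support_copy _ _ _).trans (Walk.support_map _ _))) hz)
        obtain ⟨w, hw, rfl⟩ := hz
        rw [Walk.support_reverse, List.mem_reverse] at hw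
        exact hInv x⁻¹ (inv_mem hx) w (hpx w hw)
    have hwalkB : ∀ w ∈ D, ∃ p : (BassSerreGraph Γ G₁ G₂).Walk w (vl G₁ G₂ 1),
        ∀ x ∈ p.support, x ∈ D := by
      intro w hw
      obtain ⟨x, hx, hc | hc⟩ := hw
      · subst hc
        obtain ⟨p, hp⟩ := hwalkD x hx
        refine ⟨p.reverse, ?_⟩
        intro z hz
        replace hz := List.mem_reverse.mp (Eq.mp (congrArg (z ∈ ·) (Walk.support_reverse _)) hz)
        exact hp z hz
      · subst hc
        obtain ⟨p, hp⟩ := hwalkD x hx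
        have ax : (BassSerreGraph Γ G₁ G₂).Adj (vr G₁ G₂ x) (vl G₁ G₂ x) :=
          (adj_of x x x (by simpa using one_mem G₁) (by simpa using one_mem G₂)).symm
        refine ⟨Walk.cons ax p.reverse, ?_⟩
        intro z hz
        replace hz := List.mem_cons.mp (Eq.mp (congrArg (z ∈ ·) (Walk.support_cons _ _)) hz)
        rcases hz with rfl | hz
        · exact ⟨x, hx, Or.inr rfl⟩
        · replace hz := List.mem_reverse.mp (Eq.mp (congrArg (z ∈ ·) (Walk.support_reverse _)) hz)
          exact hp z hz
    refine ⟨⟨Sum.inl (QuotientGroup.mk 1), 1, one_mem _, Or.inl rfl⟩, ?_⟩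
    intro a ha b hb
    obtain ⟨pa, hpa⟩ := hwalkB a ha
    obtain ⟨pb, hpb⟩ := hwalkB b hb
    refine ⟨pa.append pb.reverse, ?_⟩
    intro z hz
    rw [Walk.mem_support_append_iff] at hz
    rcases hz with hz | hz
    · exact hpa z hz
    · replace hz := List.mem_reverse.mp (Eq.mp (congrArg (z ∈ ·) (Walk.support_reverse _)) hz)
      exact hpb z hz
  · -- Part 3: the equivariant isomorphism
    have wd₁ : ∀ (q q' : Q), @Setoid.r Q (QuotientGroup.leftRel (P₁.subgroupOf Q)) q q' →
        (⟨Sum.inl (QuotientGroup.mk (q : Γ)), ⟨q, q.2, Or.inl rfl⟩⟩ : D)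
          = ⟨Sum.inl (QuotientGroup.mk (q' : Γ)), ⟨q', q'.2, Or.inl rfl⟩⟩ := by
      intro q q' hqq
      have h1 : ((q⁻¹ * q' : Q) : Γ) ∈ P₁ :=
        Subgroup.mem_subgroupOf.mp (QuotientGroup.leftRel_apply.mp hqq)
      have h2 : (q : Γ)⁻¹ * (q' : Γ) ∈ G₁ := hP₁ (by push_cast at h1; exact h1)
      exact Subtype.ext (congrArg Sum.inl (QuotientGroup.eq.mpr h2))
    have wd₂ : ∀ (q q' : Q), @Setoid.r Q (QuotientGroup.leftRel (P₂.subgroupOf Q)) q q' →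
        (⟨Sum.inr (QuotientGroup.mk (q : Γ)), ⟨q, q.2, Or.inr rfl⟩⟩ : D)
          = ⟨Sum.inr (QuotientGroup.mk (q' : Γ)), ⟨q', q'.2, Or.inr rfl⟩⟩ := by
      intro q q' hqq
      have h1 : ((q⁻¹ * q' : Q) : Γ) ∈ P₂ :=
        Subgroup.mem_subgroupOf.mp (QuotientGroup.leftRel_apply.mp hqq)
      have h2 : (q : Γ)⁻¹ * (q' : Γ) ∈ G₂ := hP₂ (by push_cast at h1; exact h1)
      exact Subtype.ext (congrArg Sum.inr (QuotientGroup.eq.mpr h2))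
    let F : ((Q ⧸ P₁.subgroupOf Q) ⊕ (Q ⧸ P₂.subgroupOf Q)) → D :=
      Sum.elim
        (fun u => Quotient.liftOn' u
          (fun q => (⟨Sum.inl (QuotientGroup.mk (q : Γ)), ⟨q, q.2, Or.inl rfl⟩⟩ : D)) wd₁)
        (fun u => Quotient.liftOn' u
          (fun q => (⟨Sum.inr (QuotientGroup.mk (q : Γ)), ⟨q, q.2, Or.inr rfl⟩⟩ : D)) wd₂)
    have hFinj : Function.Injective F := by
      rintro (u | u) (v | v) huv
      · induction u using Quotient.inductionOn' with | h q => ?_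
        induction v using Quotient.inductionOn' with | h q' => ?_
        have hval : (Sum.inl (QuotientGroup.mk (q : Γ)) : (Γ ⧸ G₁) ⊕ (Γ ⧸ G₂))
            = Sum.inl (QuotientGroup.mk (q' : Γ)) := congrArg Subtype.val huv
        have h1 : (q : Γ)⁻¹ * (q' : Γ) ∈ G₁ :=
          QuotientGroup.eq.mp (by injection hval)
        have h2 : (q : Γ)⁻¹ * (q' : Γ) ∈ P₁ :=
          factA hP hPP₁ hP₁ hP₂ hac (hNF _ (mul_mem (inv_mem q.2) q'.2)) h1
        refine congrArg Sum.inl (Quotient.sound' (QuotientGroup.leftRel_apply.mpr ?_))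
        rw [Subgroup.mem_subgroupOf]
        push_cast
        exact h2
      · induction u using Quotient.inductionOn' with | h q => ?_
        induction v using Quotient.inductionOn' with | h q' => ?_
        exact absurd (show (Sum.inl (QuotientGroup.mk (q : Γ)) : (Γ ⧸ G₁) ⊕ (Γ ⧸ G₂))
          = Sum.inr (QuotientGroup.mk (q' : Γ)) from congrArg Subtype.val huv) (by simp)
      · induction u using Quotient.inductionOn' with | h q => ?_
        induction v using Quotient.inductionOn' with | h q' => ?_
        exact absurd (show (Sum.inr (QuotientGroup.mk (q : Γ)) : (Γ ⧸ G₁) ⊕ (Γ ⧸ G₂))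
          = Sum.inl (QuotientGroup.mk (q' : Γ)) from congrArg Subtype.val huv) (by simp)
      · induction u using Quotient.inductionOn' with | h q => ?_
        induction v using Quotient.inductionOn' with | h q' => ?_
        have hval : (Sum.inr (QuotientGroup.mk (q : Γ)) : (Γ ⧸ G₁) ⊕ (Γ ⧸ G₂))
            = Sum.inr (QuotientGroup.mk (q' : Γ)) := congrArg Subtype.val huv
        have h1 : (q : Γ)⁻¹ * (q' : Γ) ∈ G₂ :=
          QuotientGroup.eq.mp (by injection hval)
        have h2 : (q : Γ)⁻¹ * (q' : Γ) ∈ P₂ :=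
          factB hP hPP₂ hP₁ hP₂ hac (hNF _ (mul_mem (inv_mem q.2) q'.2)) h1
        refine congrArg Sum.inr (Quotient.sound' (QuotientGroup.leftRel_apply.mpr ?_))
        rw [Subgroup.mem_subgroupOf]
        push_cast
        exact h2
    have hFsurj : Function.Surjective F := by
      rintro ⟨w, x, hx, hc | hc⟩
      · exact ⟨Sum.inl (QuotientGroup.mk (⟨x, hx⟩ : Q)), Subtype.ext hc.symm⟩
      · exact ⟨Sum.inr (QuotientGroup.mk (⟨x, hx⟩ : Q)), Subtype.ext hc.symm⟩
    refine ⟨Equiv.ofBijective F ⟨hFinj, hFsurj⟩, ?_, ?_⟩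
    · intro u v
      constructor
      · rintro ⟨qq, ⟨rfl, rfl⟩ | ⟨rfl, rfl⟩⟩
        · exact ⟨(qq : Γ), Or.inl ⟨rfl, rfl⟩⟩
        · exact ⟨(qq : Γ), Or.inr ⟨rfl, rfl⟩⟩
      · intro hadj
        rcases u with u | u <;> rcases v with v | v
        · exfalso
          induction u using Quotient.inductionOn' with | h q => ?_
          induction v using Quotient.inductionOn' with | h q' => ?_
          rcases hadj with ⟨γ, ⟨h1, h2⟩ | ⟨h1, h2⟩⟩
          · exact absurd (show (Sum.inl (QuotientGroup.mk (q' : Γ)) : (Γ ⧸ G₁) ⊕ (Γ ⧸ G₂))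
              = Sum.inr (QuotientGroup.mk γ) from h2) (by simp)
          · exact absurd (show (Sum.inl (QuotientGroup.mk (q : Γ)) : (Γ ⧸ G₁) ⊕ (Γ ⧸ G₂))
              = Sum.inr (QuotientGroup.mk γ) from h2) (by simp)
        · induction u using Quotient.inductionOn' with | h q => ?_
          induction v using Quotient.inductionOn' with | h q' => ?_
          have hadj' : (BassSerreGraph Γ G₁ G₂).Adj (vl G₁ G₂ (q : Γ)) (vr G₁ G₂ (q' : Γ)) := hadj
          obtain ⟨γ, hg1, hg2⟩ := adj_elim hadj'
          have hh : γ⁻¹ * (q' : Γ) ∈ G₂ := by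
            have := inv_mem hg2
            rwa [mul_inv_rev, inv_inv] at this
          obtain ⟨p₁, p₂, hp₁, hp₂, hxeq⟩ :=
            factC hP hPP₁ hPP₂ hP₁ hP₂ hac
              (hNF _ (mul_mem (inv_mem q.2) q'.2)) hg1 hh
              (by group)
          have hq' : (q' : Γ) = (q : Γ) * p₁ * p₂ := by
            rw [mul_assoc, ← hxeq, mul_inv_cancel_left]
          refine ⟨q * ⟨p₁, hQ1 hp₁⟩, Or.inl ⟨?_, ?_⟩⟩
          · refine congrArg Sum.inl (QuotientGroup.eq.mpr ?_)
            rw [Subgroup.mem_subgroupOf]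
            push_cast
            simpa [inv_mul_cancel_left] using hp₁
          · refine congrArg Sum.inr (QuotientGroup.eq.mpr ?_)
            rw [Subgroup.mem_subgroupOf]
            push_cast
            have : (q' : Γ)⁻¹ * ((q : Γ) * p₁) = p₂⁻¹ := by
              rw [hq']; group
            rw [this]
            exact inv_mem hp₂
        · induction u using Quotient.inductionOn' with | h q => ?_
          induction v using Quotient.inductionOn' with | h q' => ?_
          have hadj' : (BassSerreGraph Γ G₁ G₂).Adj (vl G₁ G₂ (q' : Γ)) (vr G₁ G₂ (q : Γ)) := hadj.symm
          obtain ⟨γ, hg1, hg2⟩ := adj_elim hadj'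
          have hh : γ⁻¹ * (q : Γ) ∈ G₂ := by
            have := inv_mem hg2
            rwa [mul_inv_rev, inv_inv] at this
          obtain ⟨p₁, p₂, hp₁, hp₂, hxeq⟩ :=
            factC hP hPP₁ hPP₂ hP₁ hP₂ hac
              (hNF _ (mul_mem (inv_mem q'.2) q.2)) hg1 hh
              (by group)
          have hq0 : (q : Γ) = (q' : Γ) * p₁ * p₂ := by
            rw [mul_assoc, ← hxeq, mul_inv_cancel_left]
          refine ⟨q' * ⟨p₁, hQ1 hp₁⟩, Or.inr ⟨?_, ?_⟩⟩
          · refine congrArg Sum.inl (QuotientGroup.eq.mpr ?_)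
            rw [Subgroup.mem_subgroupOf]
            push_cast
            simpa [inv_mul_cancel_left] using hp₁
          · refine congrArg Sum.inr (QuotientGroup.eq.mpr ?_)
            rw [Subgroup.mem_subgroupOf]
            push_cast
            have : (q : Γ)⁻¹ * ((q' : Γ) * p₁) = p₂⁻¹ := by
              rw [hq0]; group
            rw [this]
            exact inv_mem hp₂
        · exfalso
          induction u using Quotient.inductionOn' with | h q => ?_
          induction v using Quotient.inductionOn' with | h q' => ?_
          rcases hadj with ⟨γ, ⟨h1, h2⟩ | ⟨h1, h2⟩⟩
          · exact absurd (show (Sum.inr (QuotientGroup.mk (q : Γ)) : (Γ ⧸ G₁) ⊕ (Γ ⧸ G₂))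
              = Sum.inl (QuotientGroup.mk γ) from h1) (by simp)
          · exact absurd (show (Sum.inr (QuotientGroup.mk (q' : Γ)) : (Γ ⧸ G₁) ⊕ (Γ ⧸ G₂))
              = Sum.inl (QuotientGroup.mk γ) from h1) (by simp)
    · intro q u
      rcases u with u | u
      · induction u using Quotient.inductionOn' with | h x => ?_
        rfl
      · induction u using Quotient.inductionOn' with | h x => ?_
        rfl
  · -- Part 4: single edge quotient
    intro w hw
    obtain ⟨x, hx, hc | hc⟩ := hw
    · subst hc
      refine Or.inl ⟨x⁻¹, inv_mem hx, ?_⟩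
      show Sum.inl (QuotientGroup.mk (x⁻¹ * x)) = _
      rw [inv_mul_cancel]
    · subst hc
      refine Or.inr ⟨x⁻¹, inv_mem hx, ?_⟩
      show Sum.inr (QuotientGroup.mk (x⁻¹ * x)) = _
      rw [inv_mul_cancel]
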